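/- Let Φ : ℝ^d → ℝ^m be a feature map, ψ a probability distribution on ℝ^d, and f : ℝ^d → ℝ a target function, with f and each component of Φ square-integrable under ψ. Let X_1, …, X_n be i.i.d. samples from ψ and let ξ be a random vector in ℝ^m, independent of (X_1,…,X_n), whose components are i.i.d. with mean zero and variance σ_ξ². Define the noisy sketch s = (1/n)(∑_{i=1}^n Φ(X_i) + ξ) and the regularized loss J(a) = E_{X∼ψ}[(f(X) − ⟨a, Φ(X)⟩)²] + λ‖a‖₂² with λ = σ_ξ²/n². Then for every a ∈ ℝ^m, J(a) ≥ E_{X_1,…,X_n,ξ}[ ( (1/n)∑_{i=1}^n f(X_i) − ⟨a, s⟩ )² ]. -/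

import Mathlib

open MeasureTheory ProbabilityTheory

private lemma integrable_mul_of_memL2 {Ω : Type*} [MeasurableSpace Ω] {μ : Measure Ω}
    {f g : Ω → ℝ} (hf : MemLp f 2 μ) (hg : MemLp g 2 μ) :
    Integrable (fun ω => f ω * g ω) μ := by
  refine Integrable.mono' (((hf.integrable_sq.add hg.integrable_sq).div_const 2))
    (hf.aestronglyMeasurable.mul hg.aestronglyMeasurable) ?_
  filter_upwards with ω
  simp only [Pi.add_apply]
  rw [Real.norm_eq_abs, abs_mul]
  nlinarith [sq_nonneg (|f ω| - |g ω|), abs_nonneg (f ω), abs_nonneg (g ω),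
    sq_abs (f ω), sq_abs (g ω)]

/-- **M2M loss upper bound.** Given a feature map `Φ : ℝ^d → ℝ^m`, a training
distribution `ψ`, a square-integrable target `f`, i.i.d. samples `X_1, …, X_n ∼ ψ`,
and noise `ξ` independent of the samples with i.i.d. centered components of
variance `σξ²`, the regularized loss
`J(a) = E_ψ[(f(X) - ⟨a, Φ(X)⟩)²] + (σξ²/n²)‖a‖₂²`
upper-bounds the mean squared error of the sketch-based estimate
`⟨a, (1/n)(∑ᵢ Φ(Xᵢ) + ξ)⟩` of the empirical mean `(1/n)∑ᵢ f(Xᵢ)`. -/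
theorem m2m_loss_upper_bound
    {Ω : Type*} [MeasurableSpace Ω] (μ : Measure Ω) [IsProbabilityMeasure μ]
    (d m n : ℕ) (hn : 0 < n)
    (ψ : Measure (Fin d → ℝ)) [IsProbabilityMeasure ψ]
    (Φ : (Fin d → ℝ) → Fin m → ℝ) (f : (Fin d → ℝ) → ℝ)
    (hf : MemLp f 2 ψ) (hΦ : ∀ j, MemLp (fun x => Φ x j) 2 ψ)
    (X : Fin n → Ω → Fin d → ℝ)
    (hXmeas : ∀ i, Measurable (X i))
    (hXindep : iIndepFun X μ)
    (hXdist : ∀ i, Measure.map (X i) μ = ψ)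
    (ξ : Ω → Fin m → ℝ) (hξmeas : Measurable ξ)
    (σξ : ℝ)
    (hXξindep : IndepFun (fun ω i => X i ω) ξ μ)
    (hξindep : iIndepFun (fun j ω => ξ ω j) μ)
    (hξL2 : ∀ j, MemLp (fun ω => ξ ω j) 2 μ)
    (hξmean : ∀ j, ∫ ω, ξ ω j ∂μ = 0)
    (hξvar : ∀ j, ∫ ω, (ξ ω j) ^ 2 ∂μ = σξ ^ 2)
    (a : Fin m → ℝ) :
    (∫ x, (f x - ∑ j, a j * Φ x j) ^ 2 ∂ψ)
        + (σξ ^ 2 / (n : ℝ) ^ 2) * ∑ j, (a j) ^ 2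
      ≥ ∫ ω, ((1 / (n : ℝ)) * ∑ i, f (X i ω)
          - ∑ j, a j * ((1 / (n : ℝ)) * (∑ i, Φ (X i ω) j + ξ ω j))) ^ 2 ∂μ := by
  classical
  have hn' : (0:ℝ) < (n:ℝ) := by exact_mod_cast hn
  -- measurable representatives
  set f' : (Fin d → ℝ) → ℝ := hf.1.mk f with hf'def
  have hf'meas : StronglyMeasurable f' := hf.1.stronglyMeasurable_mk
  have hff' : f =ᵐ[ψ] f' := hf.1.ae_eq_mk
  have hf'2 : MemLp f' 2 ψ := hf.ae_eq hff'
  set Φ' : Fin m → (Fin d → ℝ) → ℝ := fun j => (hΦ j).1.mk _ with hΦ'def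
  have hΦ'meas : ∀ j, StronglyMeasurable (Φ' j) := fun j => (hΦ j).1.stronglyMeasurable_mk
  have hΦΦ' : ∀ j, (fun x => Φ x j) =ᵐ[ψ] Φ' j := fun j => (hΦ j).1.ae_eq_mk
  have hΦ'2 : ∀ j, MemLp (Φ' j) 2 ψ := fun j => (hΦ j).ae_eq (hΦΦ' j)
  set g : (Fin d → ℝ) → ℝ := fun x => f' x - ∑ j, a j * Φ' j x with hgdef
  have hgmeas : Measurable g := by
    exact hf'meas.measurable.sub
      (Finset.measurable_sum _ fun j _ => ((hΦ'meas j).measurable).const_mul (a j))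
  have hg2 : MemLp g 2 ψ := by
    exact hf'2.sub (memLp_finset_sum _ fun j _ => (hΦ'2 j).const_mul (a j))
  set S : Ω → ℝ := fun ω => ∑ i, g (X i ω) with hSdef
  set Z : Ω → ℝ := fun ω => ∑ j, a j * ξ ω j with hZdef
  -- transfer LHS
  have hL : ∫ x, (f x - ∑ j, a j * Φ x j) ^ 2 ∂ψ = ∫ x, g x ^ 2 ∂ψ := by
    apply integral_congr_ae
    filter_upwards [hff', ae_all_iff.2 hΦΦ'] with x h1 h2
    simp only [hgdef, h1]
    congr 2
    exact Finset.sum_congr rfl fun j _ => by rw [h2 j]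
  -- transfer RHS
  have hXae : ∀ i, (∀ᵐ ω ∂μ, f (X i ω) = f' (X i ω) ∧ ∀ j, Φ (X i ω) j = Φ' j (X i ω)) := by
    intro i
    have h1 : f =ᵐ[Measure.map (X i) μ] f' := by rw [hXdist i]; exact hff'
    have h2 : ∀ j, (fun x => Φ x j) =ᵐ[Measure.map (X i) μ] Φ' j := by
      intro j; rw [hXdist i]; exact hΦΦ' j
    filter_upwards [ae_eq_comp (hXmeas i).aemeasurable h1,
      ae_all_iff.2 fun j => ae_eq_comp (hXmeas i).aemeasurable (h2 j)] with ω hω1 hω2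
    exact ⟨hω1, hω2⟩
  have hR : (∫ ω, ((1 / (n : ℝ)) * ∑ i, f (X i ω)
          - ∑ j, a j * ((1 / (n : ℝ)) * (∑ i, Φ (X i ω) j + ξ ω j))) ^ 2 ∂μ)
      = ∫ ω, (1/(n:ℝ))^2 * (S ω - Z ω)^2 ∂μ := by
    apply integral_congr_ae
    filter_upwards [ae_all_iff.2 hXae] with ω hω
    have hfeq : ∀ i, f (X i ω) = f' (X i ω) := fun i => (hω i).1
    have hΦeq : ∀ i j, Φ (X i ω) j = Φ' j (X i ω) := fun i j => (hω i).2 j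
    have e0 : (∑ i, ∑ j, a j * Φ' j (X i ω)) = ∑ j, a j * ∑ i, Φ' j (X i ω) := by
      rw [Finset.sum_comm]
      exact Finset.sum_congr rfl fun j _ => (Finset.mul_sum _ _ _).symm
    have e1 : ∑ j, a j * ((1/(n:ℝ)) * (∑ i, Φ' j (X i ω) + ξ ω j))
        = (1/(n:ℝ)) * ((∑ i, ∑ j, a j * Φ' j (X i ω)) + Z ω) := by
      rw [e0, hZdef, mul_add, Finset.mul_sum, Finset.mul_sum, ← Finset.sum_add_distrib]
      exact Finset.sum_congr rfl fun j _ => by ring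
    have eS : S ω = ∑ i, f' (X i ω) - ∑ i, ∑ j, a j * Φ' j (X i ω) := by
      rw [hSdef]
      simp only [hgdef]
      rw [Finset.sum_sub_distrib]
    have key : (1/(n:ℝ)) * (∑ i, f' (X i ω))
          - ∑ j, a j * ((1/(n:ℝ)) * (∑ i, Φ' j (X i ω) + ξ ω j))
        = (1/(n:ℝ)) * (S ω - Z ω) := by
      rw [e1, eS]; ring
    calc ((1 / (n : ℝ)) * ∑ i, f (X i ω)
          - ∑ j, a j * ((1 / (n : ℝ)) * (∑ i, Φ (X i ω) j + ξ ω j))) ^ 2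
        = ((1 / (n : ℝ)) * ∑ i, f' (X i ω)
          - ∑ j, a j * ((1 / (n : ℝ)) * (∑ i, Φ' j (X i ω) + ξ ω j))) ^ 2 := by
          congr 2
          · exact congrArg _ (Finset.sum_congr rfl fun i _ => hfeq i)
          · exact Finset.sum_congr rfl fun j _ => by
              rw [Finset.sum_congr rfl fun i _ => hΦeq i j]
      _ = (1/(n:ℝ))^2 * (S ω - Z ω)^2 := by rw [key, mul_pow]
  -- L2 facts
  have hY : ∀ i, MemLp (fun ω => g (X i ω)) 2 μ := by
    intro i
    have h : MemLp g 2 (Measure.map (X i) μ) := by rw [hXdist i]; exact hg2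
    exact (memLp_map_measure_iff h.aestronglyMeasurable (hXmeas i).aemeasurable).1 h
  have hSL2 : MemLp S 2 μ := by
    rw [hSdef]; exact memLp_finset_sum _ fun i _ => hY i
  have hZL2 : MemLp Z 2 μ := by
    rw [hZdef]; exact memLp_finset_sum _ fun j _ => (hξL2 j).const_mul (a j)
  have hSZint : Integrable (fun ω => S ω * Z ω) μ := integrable_mul_of_memL2 hSL2 hZL2
  have hS2int : Integrable (fun ω => S ω ^ 2) μ := hSL2.integrable_sq
  have hZ2int : Integrable (fun ω => Z ω ^ 2) μ := hZL2.integrable_sq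
  -- expansion of the square
  have hexp : ∫ ω, (S ω - Z ω)^2 ∂μ
      = ∫ ω, S ω^2 ∂μ - 2 * ∫ ω, S ω * Z ω ∂μ + ∫ ω, Z ω ^ 2 ∂μ := by
    have h : ∀ ω, (S ω - Z ω)^2 = S ω^2 - 2*(S ω*Z ω) + Z ω^2 := fun ω => by ring
    have h1 : Integrable (fun ω => 2 * (S ω * Z ω)) μ := by exact hSZint.const_mul 2
    have h2 : Integrable (fun ω => S ω ^ 2 - 2 * (S ω * Z ω)) μ := by exact hS2int.sub h1
    simp_rw [h]
    rw [integral_add h2 hZ2int, integral_sub hS2int h1, integral_const_mul]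
  -- cross term
  have hindSZ : IndepFun S Z μ := by
    have h1 : Measurable (fun v : Fin n → Fin d → ℝ => ∑ i, g (v i)) :=
      Finset.measurable_sum _ fun i _ => hgmeas.comp (measurable_pi_apply i)
    have h2 : Measurable (fun w : Fin m → ℝ => ∑ j, a j * w j) :=
      Finset.measurable_sum _ fun j _ => Measurable.const_mul (f := fun w : Fin m → ℝ => w j) (measurable_pi_apply j) (a j)
    exact hXξindep.comp h1 h2
  have hZmean : ∫ ω, Z ω ∂μ = 0 := by
    rw [hZdef, integral_finset_sum _ fun j _ => ((hξL2 j).integrable one_le_two).const_mul (a j)]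
    simp [integral_const_mul, hξmean]
  have hcross : ∫ ω, S ω * Z ω ∂μ = 0 := by
    have h := hindSZ.integral_fun_mul_eq_mul_integral hSL2.aestronglyMeasurable hZL2.aestronglyMeasurable
    calc ∫ ω, S ω * Z ω ∂μ = (∫ ω, S ω ∂μ) * ∫ ω, Z ω ∂μ := h
      _ = 0 := by rw [hZmean, mul_zero]
  -- second moment of Z
  have hξmul : ∀ j k, Integrable (fun ω => ξ ω j * ξ ω k) μ :=
    fun j k => integrable_mul_of_memL2 (hξL2 j) (hξL2 k)
  have hξcov : ∀ j k, j ≠ k → ∫ ω, ξ ω j * ξ ω k ∂μ = 0 := by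
    intro j k hjk
    have h := (hξindep.indepFun hjk).integral_fun_mul_eq_mul_integral
      (hξL2 j).aestronglyMeasurable (hξL2 k).aestronglyMeasurable
    calc ∫ ω, ξ ω j * ξ ω k ∂μ = (∫ ω, ξ ω j ∂μ) * ∫ ω, ξ ω k ∂μ := h
      _ = 0 := by rw [hξmean j, zero_mul]
  have hZ2 : ∫ ω, Z ω ^ 2 ∂μ = σξ^2 * ∑ j, a j ^ 2 := by
    have hsq : ∀ ω, Z ω ^ 2 = ∑ j, ∑ k, (a j * a k) * (ξ ω j * ξ ω k) := by
      intro ω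
      rw [hZdef, sq, Finset.sum_mul_sum]
      exact Finset.sum_congr rfl fun j _ => Finset.sum_congr rfl fun k _ => by ring
    simp_rw [hsq]
    rw [integral_finset_sum _ fun j _ =>
      integrable_finset_sum _ fun k _ => ((hξmul j k).const_mul _)]
    have hinner : ∀ j, ∫ ω, ∑ k, (a j * a k) * (ξ ω j * ξ ω k) ∂μ = a j^2 * σξ^2 := by
      intro j
      rw [integral_finset_sum _ fun k _ => (hξmul j k).const_mul _]
      have hterm : ∀ k, ∫ ω, (a j * a k) * (ξ ω j * ξ ω k) ∂μ
          = if k = j then a j^2 * σξ^2 else 0 := by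
        intro k
        rw [integral_const_mul]
        rcases eq_or_ne k j with rfl | hkj
        · have h2 : ∀ ω, ξ ω k * ξ ω k = ξ ω k ^ 2 := fun ω => (sq _).symm
          simp_rw [h2, hξvar k]
          rw [if_true]; ring
        · rw [hξcov j k (Ne.symm hkj), mul_zero, if_neg hkj]
      rw [Finset.sum_congr rfl fun k _ => hterm k]
      simp
    rw [Finset.sum_congr rfl fun j _ => hinner j, Finset.mul_sum]
    exact Finset.sum_congr rfl fun j _ => by ring
  -- second moment of S
  have hYint : ∀ i k, Integrable (fun ω => g (X i ω) * g (X k ω)) μ :=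
    fun i k => integrable_mul_of_memL2 (hY i) (hY k)
  have hgmean : ∀ l, ∫ ω, g (X l ω) ∂μ = ∫ x, g x ∂ψ := by
    intro l
    rw [← hXdist l, integral_map (hXmeas l).aemeasurable hgmeas.aestronglyMeasurable]
  have hvarψ : (∫ x, g x ∂ψ)^2 ≤ ∫ x, g x ^ 2 ∂ψ := by
    have h := variance_nonneg g ψ
    rw [variance_eq_sub hg2] at h
    simp only [Pi.pow_apply] at h
    linarith
  have hterm : ∀ i k, ∫ ω, g (X i ω) * g (X k ω) ∂μ ≤ ∫ x, g x ^ 2 ∂ψ := by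
    intro i k
    rcases eq_or_ne i k with rfl | hik
    · have h : ∫ ω, g (X i ω) * g (X i ω) ∂μ = ∫ x, g x * g x ∂ψ := by
        rw [← hXdist i, integral_map (f := fun x => g x * g x) (hXmeas i).aemeasurable
          (hgmeas.mul hgmeas).aestronglyMeasurable]
      rw [h]
      apply le_of_eq
      exact integral_congr_ae (Filter.Eventually.of_forall fun x => (sq _).symm)
    · have hind : IndepFun (fun ω => g (X i ω)) (fun ω => g (X k ω)) μ :=
        (hXindep.indepFun hik).comp hgmeas hgmeas
      have h := hind.integral_fun_mul_eq_mul_integral (hY i).aestronglyMeasurable (hY k).aestronglyMeasurable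
      calc ∫ ω, g (X i ω) * g (X k ω) ∂μ
          = (∫ ω, g (X i ω) ∂μ) * ∫ ω, g (X k ω) ∂μ := h
        _ = (∫ x, g x ∂ψ)^2 := by rw [hgmean i, hgmean k, sq]
        _ ≤ ∫ x, g x ^ 2 ∂ψ := hvarψ
  have hS2 : ∫ ω, S ω ^ 2 ∂μ ≤ (n:ℝ)^2 * ∫ x, g x ^ 2 ∂ψ := by
    have hsq : ∀ ω, S ω ^ 2 = ∑ i, ∑ k, g (X i ω) * g (X k ω) := by
      intro ω; rw [hSdef, sq, Finset.sum_mul_sum]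
    simp_rw [hsq]
    rw [integral_finset_sum _ fun i _ => integrable_finset_sum _ fun k _ => hYint i k]
    calc ∑ i : Fin n, ∫ ω, ∑ k, g (X i ω) * g (X k ω) ∂μ
        = ∑ i : Fin n, ∑ k : Fin n, ∫ ω, g (X i ω) * g (X k ω) ∂μ :=
          Finset.sum_congr rfl fun i _ => integral_finset_sum _ fun k _ => hYint i k
      _ ≤ ∑ _i : Fin n, ∑ _k : Fin n, ∫ x, g x ^ 2 ∂ψ :=
          Finset.sum_le_sum fun i _ => Finset.sum_le_sum fun k _ => hterm i k
      _ = (n:ℝ)^2 * ∫ x, g x ^ 2 ∂ψ := by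
          simp [Finset.sum_const, Finset.card_univ]; ring
  -- assembly
  rw [ge_iff_le, hL, hR, integral_const_mul, hexp, hcross, hZ2]
  have hb : ∫ ω, S ω ^ 2 ∂μ - 2*0 + σξ^2 * ∑ j, a j ^ 2
      ≤ (n:ℝ)^2 * ∫ x, g x ^ 2 ∂ψ + σξ^2 * ∑ j, a j ^ 2 := by linarith
  calc (1/(n:ℝ))^2 * (∫ ω, S ω ^ 2 ∂μ - 2*0 + σξ^2 * ∑ j, a j ^ 2)
      ≤ (1/(n:ℝ))^2 * ((n:ℝ)^2 * ∫ x, g x ^ 2 ∂ψ + σξ^2 * ∑ j, a j ^ 2) := by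
        apply mul_le_mul_of_nonneg_left hb (by positivity)
    _ = ∫ x, g x ^ 2 ∂ψ + σξ^2/(n:ℝ)^2 * ∑ j, a j ^ 2 := by
        field_simp
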